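/- Let Θ, I, E > 0 and η ∈ ℝ with d ≥ 1. Suppose q := Θ·I/(d·E²) ≥ 1 and I' ≤ −(2/d)(1−η)·I²/E, Θ' = 2E, E' = (1−p)I with η = d(1−p). Then H := Θ^{−η/2}·E satisfies H''/(1−p) ≤ (d·E³/Θ^{η/2+2})·(η + 2 − 3ηq − 2(1−η)q²). In particular, since q ≥ 1 and 0 ≤ η ≤ 1 imply η + 2 − 3ηq − 2(1−η)q² ≤ 0, one gets H'' ≤ 0 when p < 1. -/

import Mathlib

open Real

private lemma key_ineq (d p η T Ee Ii Dv : ℝ) (hd : 0 < d) (hηd : η = d * (1 - p))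
    (hp : p ≠ 1) (hT : 0 < T) (hE : 0 < Ee) (hI : 0 < Ii)
    (hDv : Dv ≤ -(2 / d) * (1 - η) * Ii ^ 2 / Ee) :
    (2 * Ee * (-(η/2) - 1) * T ^ (-(η/2) - 2) * (-η * Ee ^ 2 + (1 - p) * T * Ii)
      + T ^ (-(η/2) - 1) * (-η * (2 * Ee * ((1 - p) * Ii)) + ((1 - p) * (2 * Ee) * Ii + (1 - p) * T * Dv))) / (1 - p)
    ≤ (d * Ee ^ 3 / T ^ (η/2 + 2))
        * (η + 2 - 3 * η * (T * Ii / (d * Ee ^ 2)) - 2 * (1 - η) * (T * Ii / (d * Ee ^ 2)) ^ 2) := by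
  subst hηd
  have h1p : (1 : ℝ) - p ≠ 0 := sub_ne_zero.mpr (Ne.symm hp)
  have hTne : T ≠ 0 := hT.ne'
  set η : ℝ := d * (1 - p) with hηdef
  have hP : (0:ℝ) < T ^ (-(η/2) - 2) := Real.rpow_pos_of_pos hT _
  set P := T ^ (-(η/2) - 2) with hPdef
  have e1 : T ^ (-(η/2) - 1) = P * T := by
    rw [hPdef, ← Real.rpow_add_one hTne]; ring_nf
  have e2 : T ^ (η/2 + 2) = P⁻¹ := by
    rw [hPdef, ← Real.rpow_neg hT.le]; ring_nf
  rw [e1, e2]; rw [show d * Ee ^ 3 / P⁻¹ = d * Ee ^ 3 * P from by field_simp]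
  set X : ℝ := 2 * Ee * (-(η/2) - 1) * (T * Ii - d * Ee ^ 2)
      + T * (-(2*η) * Ee * Ii + 2 * Ee * Ii) + T * T * Dv with hX
  set X0 : ℝ := 2 * Ee * (-(η/2) - 1) * (T * Ii - d * Ee ^ 2)
      + T * (-(2*η) * Ee * Ii + 2 * Ee * Ii) + T * T * (-(2 / d) * (1 - η) * Ii ^ 2 / Ee) with hX0
  have factored : (2 * Ee * (-(η/2) - 1) * P * (-η * Ee ^ 2 + (1 - p) * T * Ii)
      + (P * T) * (-η * (2 * Ee * ((1 - p) * Ii)) + ((1 - p) * (2 * Ee) * Ii + (1 - p) * T * Dv)))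
      = (1 - p) * (P * X) := by
    rw [hX, hηdef]; ring
  rw [factored, mul_div_cancel_left₀ _ h1p]
  have hXle : X ≤ X0 := by
    have h := mul_le_mul_of_nonneg_left hDv (mul_pos hT hT).le
    rw [hX, hX0]; nlinarith [h]
  have hfin : X0 = (d * Ee ^ 3)
      * (η + 2 - 3 * η * (T * Ii / (d * Ee ^ 2)) - 2 * (1 - η) * (T * Ii / (d * Ee ^ 2)) ^ 2) := by
    rw [hX0]; field_simp; ring
  calc P * X ≤ P * X0 := mul_le_mul_of_nonneg_left hXle hP.le
    _ = d * Ee ^ 3 * P * (η + 2 - 3 * η * (T * Ii / (d * Ee ^ 2))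
          - 2 * (1 - η) * (T * Ii / (d * Ee ^ 2)) ^ 2) := by rw [hfin]; ring

/-- Second derivative estimate on the Rényi entropy power `H = Θ^{−η/2} E`. -/
theorem renyi_power_second_deriv {d : ℕ} (hd : 1 ≤ d) (p η : ℝ) (hη : η = d * (1 - p))
    (Θ E I : ℝ → ℝ)
    (hΘpos : ∀ t, 0 < Θ t) (hEpos : ∀ t, 0 < E t) (hIpos : ∀ t, 0 < I t)
    (hΘd : Differentiable ℝ Θ) (hEd : Differentiable ℝ E) (hId : Differentiable ℝ I)
    (hΘ' : ∀ t, deriv Θ t = 2 * E t)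
    (hE' : ∀ t, deriv E t = (1 - p) * I t)
    (hI' : ∀ t, deriv I t ≤ -(2 / (d : ℝ)) * (1 - η) * (I t) ^ 2 / E t)
    (hq : ∀ t, 1 ≤ Θ t * I t / ((d : ℝ) * (E t) ^ 2))
    (H : ℝ → ℝ) (hH : ∀ t, H t = (Θ t) ^ (-(η / 2)) * E t)
    (hHd : Differentiable ℝ (deriv H)) :
    (∀ t, deriv (deriv H) t / (1 - p)
        ≤ ((d : ℝ) * (E t) ^ 3 / (Θ t) ^ (η / 2 + 2))
            * (η + 2 - 3 * η * (Θ t * I t / ((d : ℝ) * (E t) ^ 2))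
                - 2 * (1 - η) * (Θ t * I t / ((d : ℝ) * (E t) ^ 2)) ^ 2))
      ∧ (0 ≤ η → η ≤ 1 → p < 1 → ∀ t, deriv (deriv H) t ≤ 0) := by
  have hdpos : (0:ℝ) < d := by exact_mod_cast hd
  by_cases hp : p = 1
  · exfalso
    subst hp
    have hE0 : ∀ t, deriv E t = 0 := by intro t; rw [hE' t]; ring
    have hEconst : ∀ t, E t = E 0 := fun t => is_const_of_deriv_eq_zero hEd hE0 t 0
    set c := E 0 with hc
    have hcpos : 0 < c := hEpos 0
    have hg : ∀ t, HasDerivAt (fun t => Θ t - 2 * c * t) 0 t := by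
      intro t
      have h1 : HasDerivAt Θ (2 * E t) t := hΘ' t ▸ (hΘd t).hasDerivAt
      have h2 : HasDerivAt (fun t : ℝ => 2 * c * t) (2 * c) t := by
        simpa using (hasDerivAt_id t).const_mul (2 * c)
      have h3 := h1.sub h2
      have : 2 * E t - 2 * c = 0 := by rw [hEconst t]; ring
      rwa [this] at h3
    have hconst : ∀ t, Θ t - 2 * c * t = Θ 0 - 2 * c * 0 :=
      fun t => is_const_of_deriv_eq_zero (fun s => (hg s).differentiableAt)
        (fun s => (hg s).deriv) t 0
    set t0 : ℝ := -(Θ 0) / (2 * c) - 1 with ht0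
    have h4 := hconst t0
    have h5 : 2 * c * t0 = -(Θ 0) - 2 * c := by
      rw [ht0]; field_simp
    have h6 := hΘpos t0
    nlinarith [h4, h5, h6, hcpos]
  · -- main computation
    have hΘne : ∀ t, Θ t ≠ 0 := fun t => (hΘpos t).ne'
    have hDD : ∀ t, deriv (deriv H) t
        = 2 * E t * (-(η/2) - 1) * Θ t ^ (-(η/2) - 2) * (-η * (E t) ^ 2 + (1 - p) * Θ t * I t)
        + Θ t ^ (-(η/2) - 1) * (-η * (2 * E t * ((1 - p) * I t))
            + ((1 - p) * (2 * E t) * I t + (1 - p) * Θ t * deriv I t)) := by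
      have hHfun : H = fun t => Θ t ^ (-(η/2)) * E t := funext hH
      have hDH : ∀ t, HasDerivAt H (Θ t ^ (-(η/2) - 1) * (-η * (E t) ^ 2 + (1 - p) * Θ t * I t)) t := by
        intro t
        have hT : HasDerivAt Θ (2 * E t) t := hΘ' t ▸ (hΘd t).hasDerivAt
        have hE : HasDerivAt E ((1 - p) * I t) t := hE' t ▸ (hEd t).hasDerivAt
        have hpow : HasDerivAt (fun s => Θ s ^ (-(η/2))) (2 * E t * (-(η/2)) * Θ t ^ (-(η/2) - 1)) t :=
          hT.rpow_const (Or.inl (hΘne t))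
        have h : HasDerivAt (fun s => Θ s ^ (-(η/2)) * E s) _ t := hpow.mul hE
        rw [hHfun]
        convert h using 1
        rw [show Θ t ^ (-(η/2)) = Θ t ^ (-(η/2) - 1) * Θ t from by
          rw [← Real.rpow_add_one (hΘne t)]; ring_nf]
        ring
      have hDHG : deriv H = fun t => Θ t ^ (-(η/2) - 1) * (-η * (E t) ^ 2 + (1 - p) * Θ t * I t) :=
        funext fun t => (hDH t).deriv
      intro t
      rw [hDHG]
      have hT : HasDerivAt Θ (2 * E t) t := hΘ' t ▸ (hΘd t).hasDerivAt
      have hE : HasDerivAt E ((1 - p) * I t) t := hE' t ▸ (hEd t).hasDerivAt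
      have hI : HasDerivAt I (deriv I t) t := (hId t).hasDerivAt
      have hpow : HasDerivAt (fun s => Θ s ^ (-(η/2) - 1))
          (2 * E t * (-(η/2) - 1) * Θ t ^ (-(η/2) - 1 - 1)) t :=
        hT.rpow_const (Or.inl (hΘne t))
      have hinner : HasDerivAt (fun s => -η * (E s) ^ 2 + (1 - p) * Θ s * I s)
          (-η * (2 * E t * ((1 - p) * I t))
            + ((1 - p) * (2 * E t) * I t + (1 - p) * Θ t * deriv I t)) t := by
        have h1 : HasDerivAt (fun s => -η * (E s) ^ 2) (-η * (2 * E t * ((1 - p) * I t))) t := by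
          have : HasDerivAt (fun s => -η * (E s) ^ 2) _ t := (hE.pow 2).const_mul (-η)
          convert this using 1; push_cast; ring
        have h2 : HasDerivAt (fun s => (1 - p) * Θ s * I s)
            ((1 - p) * (2 * E t) * I t + (1 - p) * Θ t * deriv I t) t := by
          have : HasDerivAt (fun s => (1 - p) * Θ s * I s) _ t := ((hT.const_mul (1 - p)).mul hI)
          convert this using 1
        exact h1.add h2
      have := (show HasDerivAt (fun s => Θ s ^ (-(η/2) - 1) * (-η * (E s) ^ 2 + (1 - p) * Θ s * I s)) _ t
        from hpow.mul hinner).deriv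
      rw [this]
      rw [show (-(η/2) - 1 - 1 : ℝ) = -(η/2) - 2 from by ring]
    have main : ∀ t, deriv (deriv H) t / (1 - p)
        ≤ ((d : ℝ) * (E t) ^ 3 / (Θ t) ^ (η / 2 + 2))
            * (η + 2 - 3 * η * (Θ t * I t / ((d : ℝ) * (E t) ^ 2))
                - 2 * (1 - η) * (Θ t * I t / ((d : ℝ) * (E t) ^ 2)) ^ 2) := by
      intro t
      rw [hDD t]
      exact key_ineq (d : ℝ) p η (Θ t) (E t) (I t) (deriv I t) hdpos hη hp
        (hΘpos t) (hEpos t) (hIpos t) (hI' t)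
    refine ⟨main, fun hη0 hη1 hplt t => ?_⟩
    have h1p : (0:ℝ) < 1 - p := by linarith
    set q : ℝ := Θ t * I t / ((d : ℝ) * (E t) ^ 2) with hqdef
    have hq1 : 1 ≤ q := hq t
    have hQ : η + 2 - 3 * η * q - 2 * (1 - η) * q ^ 2 ≤ 0 := by
      nlinarith [mul_nonneg (sub_nonneg.mpr hq1) (by nlinarith : (0:ℝ) ≤ 2 * (1 - η) * q + η + 2)]
    have hpos : 0 < (d : ℝ) * (E t) ^ 3 / (Θ t) ^ (η / 2 + 2) := by
      exact div_pos (mul_pos hdpos (pow_pos (hEpos t) 3)) (Real.rpow_pos_of_pos (hΘpos t) _)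
    have hRHS : ((d : ℝ) * (E t) ^ 3 / (Θ t) ^ (η / 2 + 2))
        * (η + 2 - 3 * η * q - 2 * (1 - η) * q ^ 2) ≤ 0 :=
      mul_nonpos_of_nonneg_of_nonpos hpos.le hQ
    have h := le_trans (main t) hRHS
    have := div_mul_cancel₀ (deriv (deriv H) t) h1p.ne'
    calc deriv (deriv H) t = deriv (deriv H) t / (1 - p) * (1 - p) := this.symm
      _ ≤ 0 := mul_nonpos_of_nonpos_of_nonneg h h1p.le
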